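/- Let H ∈ ℂ^{Nr×Nt} and let X, Y ∈ ℂ^{Nt×Nt} be Hermitian positive semidefinite. Then ‖H†(I + H X H†)⁻¹H (Y − X) H†(I + H Y H†)⁻¹H‖_F ≤ σ_max²(H†H) ‖X − Y‖_F, where ‖·‖_F is the Frobenius norm and σ_max(·) the largest singular value. -/

import Mathlib

open Matrix
open scoped ComplexOrder

/-- The Frobenius norm `‖M‖_F = sqrt(tr(Mᴴ M))` of a complex matrix. -/
noncomputable def frobNorm {m n : ℕ} (M : Matrix (Fin m) (Fin n) ℂ) : ℝ :=
  Real.sqrt (Matrix.trace (Mᴴ * M)).re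

/-- The largest singular value of a square complex matrix, i.e. the operator norm
of the associated continuous linear endomorphism of Euclidean space. -/
noncomputable def sigmaMax {n : ℕ} (M : Matrix (Fin n) (Fin n) ℂ) : ℝ :=
  ‖Matrix.toEuclideanCLM (𝕜 := ℂ) M‖


open scoped Matrix.Norms.L2Operator

lemma sigmaMax_eq_norm {n : ℕ} (M : Matrix (Fin n) (Fin n) ℂ) : sigmaMax M = ‖M‖ := rfl

lemma trace_re_eq_sum {m n : ℕ} (M : Matrix (Fin m) (Fin n) ℂ) :
    (Matrix.trace (Mᴴ * M)).re = ∑ j, ∑ i, ‖M i j‖ ^ 2 := by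
  simp only [Matrix.trace, Matrix.diag, Matrix.mul_apply, Matrix.conjTranspose_apply,
    Complex.re_sum]
  refine Finset.sum_congr rfl fun j _ => Finset.sum_congr rfl fun i _ => ?_
  rw [Complex.mul_re]
  simp only [Complex.star_def, Complex.conj_re, Complex.conj_im,
    Complex.sq_norm, Complex.normSq_apply]
  ring

lemma frobNorm_eq {m n : ℕ} (M : Matrix (Fin m) (Fin n) ℂ) :
    frobNorm M = Real.sqrt (∑ j, ∑ i, ‖M i j‖ ^ 2) := by
  rw [frobNorm, trace_re_eq_sum]

lemma frobNorm_nonneg {m n : ℕ} (M : Matrix (Fin m) (Fin n) ℂ) : 0 ≤ frobNorm M :=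
  Real.sqrt_nonneg _

lemma frobNorm_conjTranspose {m n : ℕ} (M : Matrix (Fin m) (Fin n) ℂ) :
    frobNorm Mᴴ = frobNorm M := by
  rw [frobNorm, frobNorm, conjTranspose_conjTranspose, Matrix.trace_mul_comm]

lemma frobNorm_neg {m n : ℕ} (M : Matrix (Fin m) (Fin n) ℂ) :
    frobNorm (-M) = frobNorm M := by
  rw [frobNorm, frobNorm, conjTranspose_neg, Matrix.neg_mul, Matrix.mul_neg, neg_neg]

lemma euclid_norm_sq {n : ℕ} (v : EuclideanSpace ℂ (Fin n)) :
    ‖v‖ ^ 2 = ∑ i, ‖v i‖ ^ 2 := by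
  rw [EuclideanSpace.norm_eq, Real.sq_sqrt]
  positivity

lemma frobNorm_mul_left_le {n k : ℕ} (A : Matrix (Fin n) (Fin n) ℂ)
    (M : Matrix (Fin n) (Fin k) ℂ) :
    frobNorm (A * M) ≤ sigmaMax A * frobNorm M := by
  have hA : (0:ℝ) ≤ sigmaMax A := norm_nonneg _
  have key : ∀ j, ∑ i, ‖(A * M) i j‖ ^ 2 ≤ sigmaMax A ^ 2 * ∑ i, ‖M i j‖ ^ 2 := by
    intro j
    set x : EuclideanSpace ℂ (Fin n) := (WithLp.equiv 2 (Fin n → ℂ)).symm fun i => M i j with hx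
    have h1 : ‖(EuclideanSpace.equiv (Fin n) ℂ).symm (A *ᵥ x)‖ ≤ ‖A‖ * ‖x‖ :=
      Matrix.l2_opNorm_mulVec A x
    have h2 := pow_le_pow_left₀ (norm_nonneg _) h1 2
    have hL : ‖(EuclideanSpace.equiv (Fin n) ℂ).symm (A *ᵥ x)‖ ^ 2 = ∑ i, ‖(A * M) i j‖ ^ 2 := by
      rw [euclid_norm_sq]
      refine Finset.sum_congr rfl fun i _ => ?_
      simp [Matrix.mul_apply, Matrix.mulVec, dotProduct, hx]
    have hR : (‖A‖ * ‖x‖) ^ 2 = sigmaMax A ^ 2 * ∑ i, ‖M i j‖ ^ 2 := by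
      rw [mul_pow, euclid_norm_sq, sigmaMax_eq_norm]
      congr 1
    rw [hL, hR] at h2
    exact h2
  rw [frobNorm_eq, frobNorm_eq]
  calc Real.sqrt (∑ j, ∑ i, ‖(A * M) i j‖ ^ 2)
      ≤ Real.sqrt (∑ j, sigmaMax A ^ 2 * ∑ i, ‖M i j‖ ^ 2) :=
        Real.sqrt_le_sqrt (Finset.sum_le_sum fun j _ => key j)
    _ = sigmaMax A * Real.sqrt (∑ j, ∑ i, ‖M i j‖ ^ 2) := by
        rw [← Finset.mul_sum, Real.sqrt_mul (sq_nonneg _), Real.sqrt_sq hA]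

lemma sigmaMax_conjTranspose {n : ℕ} (A : Matrix (Fin n) (Fin n) ℂ) :
    sigmaMax Aᴴ = sigmaMax A := by
  rw [sigmaMax_eq_norm, sigmaMax_eq_norm]
  exact Matrix.l2_opNorm_conjTranspose A

lemma frobNorm_mul_right_le {n k : ℕ} (M : Matrix (Fin k) (Fin n) ℂ)
    (B : Matrix (Fin n) (Fin n) ℂ) :
    frobNorm (M * B) ≤ frobNorm M * sigmaMax B := by
  have : frobNorm (M * B) = frobNorm (Bᴴ * Mᴴ) := by
    rw [← frobNorm_conjTranspose (M * B), conjTranspose_mul]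
  rw [this]
  calc frobNorm (Bᴴ * Mᴴ) ≤ sigmaMax Bᴴ * frobNorm Mᴴ := frobNorm_mul_left_le _ _
    _ = frobNorm M * sigmaMax B := by
        rw [sigmaMax_conjTranspose, frobNorm_conjTranspose, mul_comm]

lemma l2_norm_inv_one_add_le_one {m : ℕ} {Q : Matrix (Fin m) (Fin m) ℂ} (hQ : Q.PosSemidef) :
    ‖(1 + Q)⁻¹‖ ≤ 1 := by
  set P : Matrix (Fin m) (Fin m) ℂ := 1 + Q with hP
  have hPD : P.PosDef := Matrix.PosDef.add_posSemidef Matrix.PosDef.one hQ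
  have hdet : IsUnit P.det := (Matrix.isUnit_iff_isUnit_det P).mp hPD.isUnit
  have hmul : P * P⁻¹ = 1 := Matrix.mul_nonsing_inv P hdet
  have key : ∀ v : Fin m → ℂ,
      ‖(WithLp.equiv 2 (Fin m → ℂ)).symm v‖ ≤ ‖(WithLp.equiv 2 (Fin m → ℂ)).symm (P *ᵥ v)‖ := by
    intro v
    set y : EuclideanSpace ℂ (Fin m) := (WithLp.equiv 2 (Fin m → ℂ)).symm v with hy
    set z : EuclideanSpace ℂ (Fin m) := (WithLp.equiv 2 (Fin m → ℂ)).symm (P *ᵥ v) with hz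
    have hinner : inner ℂ y z = dotProduct (star v) (P *ᵥ v) :=
      (EuclideanSpace.inner_toLp_toLp v (P *ᵥ v)).trans (dotProduct_comm _ _)
    have hself : inner ℂ y y = dotProduct (star v) v :=
      (EuclideanSpace.inner_toLp_toLp v v).trans (dotProduct_comm _ _)
    have hre : ‖y‖ ^ 2 ≤ (inner ℂ y z : ℂ).re := by
      have h1 : (inner ℂ y z : ℂ).re
          = (dotProduct (star v) v).re + (dotProduct (star v) (Q *ᵥ v)).re := by
        rw [hinner, hP, Matrix.add_mulVec, Matrix.one_mulVec, dotProduct_add,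
          Complex.add_re]
      have h2 : (dotProduct (star v) v).re = ‖y‖ ^ 2 := by
        have := @inner_self_eq_norm_sq ℂ _ _ _ _ y
        rw [hself] at this
        exact this
      have h3 : 0 ≤ (dotProduct (star v) (Q *ᵥ v)).re := hQ.re_dotProduct_nonneg v
      rw [h1, h2]
      linarith
    have hcs : (inner ℂ y z : ℂ).re ≤ ‖y‖ * ‖z‖ :=
      le_trans (Complex.re_le_norm _) (by
        exact norm_inner_le_norm y z)
    nlinarith [norm_nonneg y, norm_nonneg z]
  rw [Matrix.cstar_norm_def]
  refine ContinuousLinearMap.opNorm_le_bound _ zero_le_one fun x => ?_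
  rw [one_mul]
  have h2 : P *ᵥ (WithLp.equiv 2 (Fin m → ℂ) ((Matrix.toEuclideanCLM (𝕜 := ℂ) P⁻¹) x))
      = WithLp.equiv 2 (Fin m → ℂ) x := by
    show P *ᵥ ((Matrix.toEuclideanCLM (𝕜 := ℂ) P⁻¹) x).ofLp = x.ofLp
    rw [Matrix.ofLp_toEuclideanCLM, Matrix.mulVec_mulVec, hmul, Matrix.one_mulVec]
  have h3 := key (WithLp.equiv 2 (Fin m → ℂ) ((Matrix.toEuclideanCLM (𝕜 := ℂ) P⁻¹) x))
  rw [h2] at h3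
  exact h3

lemma sigmaMax_nonneg {n : ℕ} (M : Matrix (Fin n) (Fin n) ℂ) : 0 ≤ sigmaMax M :=
  norm_nonneg _


/-- For Hermitian positive semidefinite `X, Y`,
`‖Hᴴ(I + H X Hᴴ)⁻¹H (Y − X) Hᴴ(I + H Y Hᴴ)⁻¹H‖_F ≤ σ_max²(HᴴH) ‖X − Y‖_F`. -/
theorem stmt_11 {Nr Nt : ℕ}
    (H : Matrix (Fin Nr) (Fin Nt) ℂ)
    (X Y : Matrix (Fin Nt) (Fin Nt) ℂ)
    (hX : X.PosSemidef) (hY : Y.PosSemidef) :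
    frobNorm (Hᴴ * (1 + H * X * Hᴴ)⁻¹ * H * (Y - X) * (Hᴴ * (1 + H * Y * Hᴴ)⁻¹ * H))
      ≤ sigmaMax (Hᴴ * H) ^ 2 * frobNorm (X - Y) := by
  have hS1 : ‖(1 + H * X * Hᴴ)⁻¹‖ ≤ 1 :=
    l2_norm_inv_one_add_le_one (hX.mul_mul_conjTranspose_same H)
  have hS2 : ‖(1 + H * Y * Hᴴ)⁻¹‖ ≤ 1 :=
    l2_norm_inv_one_add_le_one (hY.mul_mul_conjTranspose_same H)
  have hb : ∀ (S : Matrix (Fin Nr) (Fin Nr) ℂ), ‖S‖ ≤ 1 →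
      sigmaMax (Hᴴ * S * H) ≤ sigmaMax (Hᴴ * H) := by
    intro S hS
    rw [sigmaMax_eq_norm, sigmaMax_eq_norm]
    calc ‖Hᴴ * S * H‖ ≤ ‖Hᴴ * S‖ * ‖H‖ := Matrix.l2_opNorm_mul _ _
      _ ≤ (‖Hᴴ‖ * ‖S‖) * ‖H‖ :=
          mul_le_mul_of_nonneg_right (Matrix.l2_opNorm_mul _ _) (norm_nonneg _)
      _ ≤ (‖Hᴴ‖ * 1) * ‖H‖ :=
          mul_le_mul_of_nonneg_right
            (mul_le_mul_of_nonneg_left hS (norm_nonneg _)) (norm_nonneg _)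
      _ = ‖H‖ * ‖H‖ := by rw [mul_one, Matrix.l2_opNorm_conjTranspose]
      _ = ‖Hᴴ * H‖ := (Matrix.l2_opNorm_conjTranspose_mul_self H).symm
  have h1 := hb _ hS1
  have h2 := hb _ hS2
  have hYX : frobNorm (Y - X) = frobNorm (X - Y) := by
    rw [← frobNorm_neg (Y - X), neg_sub]
  calc frobNorm (Hᴴ * (1 + H * X * Hᴴ)⁻¹ * H * (Y - X) * (Hᴴ * (1 + H * Y * Hᴴ)⁻¹ * H))
      ≤ frobNorm (Hᴴ * (1 + H * X * Hᴴ)⁻¹ * H * (Y - X))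
          * sigmaMax (Hᴴ * (1 + H * Y * Hᴴ)⁻¹ * H) := frobNorm_mul_right_le _ _
    _ ≤ (sigmaMax (Hᴴ * (1 + H * X * Hᴴ)⁻¹ * H) * frobNorm (Y - X))
          * sigmaMax (Hᴴ * (1 + H * Y * Hᴴ)⁻¹ * H) :=
        mul_le_mul_of_nonneg_right (frobNorm_mul_left_le _ _) (sigmaMax_nonneg _)
    _ ≤ (sigmaMax (Hᴴ * H) * frobNorm (Y - X)) * sigmaMax (Hᴴ * H) :=
        mul_le_mul (mul_le_mul_of_nonneg_right h1 (frobNorm_nonneg _)) h2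
          (sigmaMax_nonneg _)
          (mul_nonneg (sigmaMax_nonneg _) (frobNorm_nonneg _))
    _ = sigmaMax (Hᴴ * H) ^ 2 * frobNorm (X - Y) := by rw [hYX]; ring
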